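/- Let h : ℝ^p → ℝ ∪ {+∞} be proper, closed, and convex, and suppose h satisfies the quadratic growth condition on a set B: h(β) ≥ inf h + (κ/2) dist²(β, S) for all β ∈ B, where S = argmin h is nonempty. Then the subdifferential error bound holds on B: dist(β, S) ≤ (2/κ) dist(0, ∂h(β)) for all β ∈ B with ∂h(β) nonempty. -/

import Mathlib

/-- The convex subdifferential of an extended-real-valued function. -/
def subdiff {p : ℕ} (h : EuclideanSpace ℝ (Fin p) → EReal)
    (β : EuclideanSpace ℝ (Fin p)) : Set (EuclideanSpace ℝ (Fin p)) :=
  {s | ∀ γ : EuclideanSpace ℝ (Fin p),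
    h β + ((inner ℝ s (γ - β) : ℝ) : EReal) ≤ h γ}

/-- If every element of a nonempty set is at distance at least `b` from `x`,
then `b ≤ infDist x s`. -/
lemma le_infDist_aux {α : Type*} [MetricSpace α] {s : Set α} (hs : s.Nonempty)
    {x : α} {b : ℝ} (H : ∀ y ∈ s, b ≤ dist x y) : b ≤ Metric.infDist x s := by
  by_contra hlt
  obtain ⟨y, hy, hd⟩ := (Metric.infDist_lt_iff hs).mp (not_le.mp hlt)
  exact absurd (H y hy) (not_le.mpr hd)

/-- Quadratic growth implies the subdifferential error bound:
if `h(β) ≥ inf h + (κ/2) dist²(β, S)` on `B` with `S = argmin h ≠ ∅`, then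
`dist(β, S) ≤ (2/κ) dist(0, ∂h(β))` on `B` wherever `∂h(β) ≠ ∅`. -/
theorem quadratic_growth_error_bound (p : ℕ)
    (h : EuclideanSpace ℝ (Fin p) → EReal)
    (hproper : (∃ x, h x ≠ ⊤) ∧ ∀ x, h x ≠ ⊥)
    (hlsc : LowerSemicontinuous h)
    (hconv : Convex ℝ {q : EuclideanSpace ℝ (Fin p) × ℝ | h q.1 ≤ (q.2 : EReal)})
    (S : Set (EuclideanSpace ℝ (Fin p)))
    (hS : S = {x | ∀ y, h x ≤ h y}) (hSne : S.Nonempty)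
    (κ : ℝ) (hκ : 0 < κ) (B : Set (EuclideanSpace ℝ (Fin p)))
    (hQG : ∀ x₀ ∈ S, ∀ β ∈ B,
      h x₀ + ((κ / 2 * (Metric.infDist β S) ^ 2 : ℝ) : EReal) ≤ h β) :
    ∀ β ∈ B, (subdiff h β).Nonempty →
      Metric.infDist β S ≤ (2 / κ) * Metric.infDist 0 (subdiff h β) := by
  obtain ⟨⟨z, hz⟩, hbot⟩ := hproper
  obtain ⟨x₀, hx₀S⟩ := hSne
  have hx₀min : ∀ y, h x₀ ≤ h y := by rw [hS] at hx₀S; exact hx₀S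
  have hx₀top : h x₀ ≠ ⊤ := fun ht => hz (top_le_iff.mp (ht ▸ hx₀min z))
  set a : ℝ := (h x₀).toReal with ha
  have hx₀a : h x₀ = (a : EReal) := (EReal.coe_toReal hx₀top (hbot x₀)).symm
  intro β hβ ⟨s₀, hs₀⟩
  set d := Metric.infDist β S with hd
  have hd0 : 0 ≤ d := Metric.infDist_nonneg
  -- key: for every subgradient s, (κ/2) * d ≤ ‖s‖
  have key : ∀ s ∈ subdiff h β, κ / 2 * d ≤ ‖s‖ := by
    intro s hs
    -- h β is finite
    have hβtop : h β ≠ ⊤ := by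
      intro ht
      have h1 := hs x₀
      rw [ht, EReal.top_add_of_ne_bot (EReal.coe_ne_bot _)] at h1
      exact hx₀top (top_le_iff.mp h1)
    set b : ℝ := (h β).toReal with hb
    have hβb : h β = (b : EReal) := (EReal.coe_toReal hβtop (hbot β)).symm
    -- quadratic growth, in ℝ
    have hqg : a + κ / 2 * d ^ 2 ≤ b := by
      have := hQG x₀ hx₀S β hβ
      rw [hx₀a, hβb, ← EReal.coe_add] at this
      exact_mod_cast this
    -- subgradient inequality against any γ ∈ S, in ℝ
    have hsub : ∀ γ ∈ S, κ / 2 * d ^ 2 ≤ ‖s‖ * dist β γ := by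
      intro γ hγ
      have hγmin : ∀ y, h γ ≤ h y := by rw [hS] at hγ; exact hγ
      have hγa : h γ = (a : EReal) := by
        rw [← hx₀a]; exact le_antisymm (hγmin x₀) (hx₀min γ)
      have h1 := hs γ
      rw [hβb, hγa, ← EReal.coe_add] at h1
      have h2 : b + (inner ℝ s (γ - β) : ℝ) ≤ a := by exact_mod_cast h1
      have h3 : (inner ℝ s (β - γ) : ℝ) ≤ ‖s‖ * ‖β - γ‖ := real_inner_le_norm s (β - γ)
      have h4 : (inner ℝ s (β - γ) : ℝ) = -(inner ℝ s (γ - β) : ℝ) := by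
        rw [← inner_neg_right]; congr 1; abel
      rw [dist_eq_norm]
      nlinarith [h2, h3, h4, hqg]
    -- conclude κ/2 * d ≤ ‖s‖
    rcases eq_or_lt_of_le hd0 with hdz | hdp
    · rw [← hdz, mul_zero]; exact norm_nonneg s
    · have hns : 0 < ‖s‖ := by
        rcases (norm_nonneg s).eq_or_lt with hn0 | hn0
        · exfalso
          have := hsub x₀ hx₀S
          rw [← hn0, zero_mul] at this
          have hpos : 0 < κ / 2 * d ^ 2 := by positivity
          linarith
        · exact hn0
      have hdiv : κ / 2 * d ^ 2 / ‖s‖ ≤ d := by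
        apply le_infDist_aux ⟨x₀, hx₀S⟩
        intro γ hγ
        exact (div_le_iff₀ hns).mpr (by linarith [hsub γ hγ])
      have : κ / 2 * d ^ 2 ≤ ‖s‖ * d := by
        rw [div_le_iff₀ hns] at hdiv; linarith [hdiv]
      have := (mul_le_mul_iff_of_pos_right hdp).mp (by nlinarith : κ / 2 * d * d ≤ ‖s‖ * d)
      linarith
  -- finish
  have hfin : κ / 2 * d ≤ Metric.infDist 0 (subdiff h β) := by
    apply le_infDist_aux ⟨s₀, hs₀⟩
    intro y hy
    rw [dist_zero_left]
    exact key y hy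
  have h2κ : 0 < 2 / κ := by positivity
  calc d = (2 / κ) * (κ / 2 * d) := by field_simp
    _ ≤ (2 / κ) * Metric.infDist 0 (subdiff h β) := by
        exact mul_le_mul_of_nonneg_left hfin (le_of_lt h2κ)
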